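/- arXiv:1807.01896 — 6 statements merged into one kernel-verified Lean document; each statement's English description precedes it below -/
import Mathlib

section
/- If {a, b, c} is a Diophantine triple in the ring of integers O_K of an imaginary quadratic field (i.e., a, b, c are distinct, each pairwise product plus one is a square in O_K) and abc ≠ 0, then none of ab, ac, bc is a square in K. -/
open NumberField Complex

section Aux

variable {K : Type*} [Field K] [NumberField K]

lemma aux_norm (hdeg : Module.finrank ℚ K = 2) (f : K →+* ℂ)
    (him : ∃ w : K, (f w).im ≠ 0) (x : 𝓞 K) :
    ∃ n : ℤ, (n : ℝ) = Complex.normSq (f x) := by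
  classical
  set g : K →+* ℂ := (starRingEnd ℂ).comp f with hg
  have hfg : f ≠ g := by
    intro h
    obtain ⟨w, hw⟩ := him
    have : f w = g w := by rw [← h]
    simp [hg, Complex.ext_iff] at this
    apply hw; linarith
  have hcard : Fintype.card (K →+* ℂ) = 2 := by
    rw [NumberField.Embeddings.card K ℂ, hdeg]
  have huniv : (Finset.univ : Finset (K →+* ℂ)) = {f, g} := by
    symm
    apply Finset.eq_univ_of_card
    rw [Finset.card_insert_of_notMem (by simp [hfg]), Finset.card_singleton, hcard]
  have hint : IsIntegral ℤ (Algebra.norm ℚ (x : K)) :=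
    Algebra.isIntegral_norm ℚ (RingOfIntegers.isIntegral_coe x)
  obtain ⟨n, hn⟩ := IsIntegrallyClosed.isIntegral_iff.mp hint
  refine ⟨n, ?_⟩
  have hprod : algebraMap ℚ ℂ (Algebra.norm ℚ (x : K)) = ∏ σ : K →ₐ[ℚ] ℂ, σ (x : K) :=
    Algebra.norm_eq_prod_embeddings ℚ ℂ (x : K)
  have hprod2 : ∏ σ : K →ₐ[ℚ] ℂ, σ (x : K) = ∏ σ : K →+* ℂ, σ (x : K) :=
    (Fintype.prod_equiv (RingHom.equivRatAlgHom K ℂ) (fun σ => (RingHom.equivRatAlgHom K ℂ σ) (x:K)) _ (fun σ => rfl)).symm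
  have hprod3 : ∏ σ : K →+* ℂ, σ (x : K) = f (x:K) * g (x:K) := by
    rw [show (∏ σ : K →+* ℂ, σ (x : K)) = ∏ σ ∈ (Finset.univ : Finset (K →+* ℂ)), σ (x:K) from rfl,
      huniv, Finset.prod_insert (by simp [hfg]), Finset.prod_singleton]
  have key : (n : ℂ) = f (x:K) * g (x:K) := by
    rw [← hprod3, ← hprod2, ← hprod, ← hn]
    simp
  have : g (x:K) = (starRingEnd ℂ) (f (x:K)) := rfl
  rw [this, Complex.mul_conj] at key
  exact_mod_cast key

lemma par_aux (m m' n : ℤ) (h : m * m + m' * m' = 4 * n) :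
    (∃ p : ℤ, m = 2 * p) ∧ (∃ q : ℤ, m' = 2 * q) := by
  rcases Int.even_or_odd m with ⟨k, hk⟩ | ⟨k, hk⟩ <;>
    rcases Int.even_or_odd m' with ⟨j, hj⟩ | ⟨j, hj⟩
  · exact ⟨⟨k, by omega⟩, ⟨j, by omega⟩⟩
  · exfalso
    obtain ⟨t, ht⟩ : ∃ t : ℤ, t = k*k + j*j + j := ⟨_, rfl⟩
    have h2 : 4 * t + 1 = 4 * n := by rw [ht]; subst hk hj; linear_combination h
    omega
  · exfalso
    obtain ⟨t, ht⟩ : ∃ t : ℤ, t = k*k + k + j*j := ⟨_, rfl⟩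
    have h2 : 4 * t + 1 = 4 * n := by rw [ht]; subst hk hj; linear_combination h
    omega
  · exfalso
    obtain ⟨t, ht⟩ : ∃ t : ℤ, t = k*k + k + j*j + j := ⟨_, rfl⟩
    have h2 : 4 * t + 2 = 4 * n := by rw [ht]; subst hk hj; linear_combination h
    omega

lemma gauss_aux (p q r s : ℤ) (h1 : p*p - q*q + r*r - s*s = 2) (h2 : p*q + r*s = 0) :
    p*p - q*q = 1 ∧ p*q = 0 := by
  have key : ((p-s)*(p-s) + (q+r)*(q+r)) * ((p+s)*(p+s) + (q-r)*(q-r)) = 4 := by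
    linear_combination (p*p - q*q + r*r - s*s + 2) * h1 + (4*(p*q + r*s)) * h2
  have sqb : ∀ x : ℤ, x*x ≤ 4 → -2 ≤ x ∧ x ≤ 2 := by
    intro x hx
    constructor
    · nlinarith [mul_self_nonneg (x+2)]
    · nlinarith [mul_self_nonneg (x-2)]
  have hm0 : 0 ≤ (p-s)*(p-s) + (q+r)*(q+r) := by
    have := mul_self_nonneg (p-s); have := mul_self_nonneg (q+r); linarith
  have hn0 : 0 ≤ (p+s)*(p+s) + (q-r)*(q-r) := by
    have := mul_self_nonneg (p+s); have := mul_self_nonneg (q-r); linarith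
  have hm1 : 1 ≤ (p-s)*(p-s) + (q+r)*(q+r) := by nlinarith
  have hn1 : 1 ≤ (p+s)*(p+s) + (q-r)*(q-r) := by nlinarith
  have hm4 : (p-s)*(p-s) + (q+r)*(q+r) ≤ 4 := by nlinarith
  have hn4 : (p+s)*(p+s) + (q-r)*(q-r) ≤ 4 := by nlinarith
  have b1 := sqb (p-s) (by linarith [mul_self_nonneg (q+r)])
  have b2 := sqb (p+s) (by linarith [mul_self_nonneg (q-r)])
  have b3 := sqb (q+r) (by linarith [mul_self_nonneg (p-s)])
  have b4 := sqb (q-r) (by linarith [mul_self_nonneg (p+s)])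
  have hp : -2 ≤ p ∧ p ≤ 2 := by omega
  have hq : -2 ≤ q ∧ q ≤ 2 := by omega
  have hr : -2 ≤ r ∧ r ≤ 2 := by omega
  have hs : -2 ≤ s ∧ s ≤ 2 := by omega
  obtain ⟨hp1, hp2⟩ := hp; obtain ⟨hq1, hq2⟩ := hq
  obtain ⟨hr1, hr2⟩ := hr; obtain ⟨hs1, hs2⟩ := hs
  clear sqb key hm0 hn0 hm1 hn1 hm4 hn4 b1 b2 b3 b4
  interval_cases p <;> interval_cases q <;> interval_cases r <;> interval_cases s <;> omega

lemma trap (f : K →+* ℂ)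
    (hN : ∀ x : 𝓞 K, ∃ n : ℤ, (n : ℝ) = Complex.normSq (f x))
    (x y r : 𝓞 K) (hx : x ≠ 0) (hyx : y * y = x) (hr : x + 1 = r * r) :
    x = -1 := by
  set F : 𝓞 K →+* ℂ := f.comp (algebraMap (𝓞 K) K) with hF
  have hFinj : Function.Injective F := f.injective.comp (IsFractionRing.injective (𝓞 K) K)
  have hFx : ∀ z : 𝓞 K, F z = f (z : K) := fun z => rfl
  set u : 𝓞 K := r - y with hu
  set v : 𝓞 K := r + y with hv
  have huv : u * v = 1 := by
    simp only [hu, hv]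
    linear_combination -hr - hyx
  have huvC : F u * F v = 1 := by rw [← map_one F, ← huv, map_mul]
  have hco : ∀ z : 𝓞 K, f (z:K) = F z := fun z => rfl
  obtain ⟨nu, hnu⟩ := hN u
  obtain ⟨nv, hnv⟩ := hN v
  rw [hco] at hnu hnv
  have hnuv : (nu * nv : ℝ) = 1 := by
    push_cast
    rw [hnu, hnv, ← Complex.normSq_mul, huvC, Complex.normSq_one]
  have hnuv' : nu * nv = 1 := by exact_mod_cast hnuv
  have hnu0 : 0 ≤ nu := by
    have := Complex.normSq_nonneg (F u); rw [← hnu] at this; exact_mod_cast this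
  have hnu1 : nu = 1 := Int.eq_one_of_mul_eq_one_right hnu0 hnuv'
  have hU1 : Complex.normSq (F u) = 1 := by rw [← hnu, hnu1]; norm_num
  have hFu0 : F u ≠ 0 := by
    intro h; rw [h] at huvC; simp at huvC
  have hvconj : F v = (starRingEnd ℂ) (F u) := by
    have h2 : F u * (starRingEnd ℂ) (F u) = 1 := by rw [Complex.mul_conj, hU1]; norm_num
    exact mul_left_cancel₀ hFu0 (by rw [huvC, h2])
  have hyuv : F v - F u = 2 * F y := by
    rw [← map_ofNat F 2, ← map_mul, ← map_sub]
    congr 1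
    simp only [hu, hv]; ring
  have hxy : F x = F y * F y := by rw [← map_mul, hyx]
  obtain ⟨nx, hnx⟩ := hN x
  rw [hco] at hnx
  have hnx1 : 1 ≤ nx := by
    have h0 : F x ≠ 0 := fun h => hx (hFinj (by rw [h, map_zero]))
    have : 0 < Complex.normSq (F x) := Complex.normSq_pos.mpr h0
    rw [← hnx] at this
    exact_mod_cast this
  set e := (F u).re with he
  set i := (F u).im with hi
  have hei : e * e + i * i = 1 := by rw [← Complex.normSq_apply, hU1]
  have hFy : F y = Complex.mk 0 (-i) := by
    have : (2 : ℂ) ≠ 0 := by norm_num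
    apply mul_left_cancel₀ this
    rw [← hyuv, hvconj]
    apply Complex.ext <;> simp [Complex.ext_iff] <;> ring
  have hFxval : F x = Complex.mk (-(i*i)) 0 := by
    rw [hxy, hFy]
    apply Complex.ext <;> simp [Complex.mul_re, Complex.mul_im]
  have hnxval : (nx : ℝ) = (i*i)*(i*i) := by
    rw [hnx, hFxval, Complex.normSq_apply]; ring_nf
  have hii : i * i = 1 := by nlinarith [sq_nonneg (i*i - 1), sq_nonneg e, (by exact_mod_cast hnx1 : (1:ℝ) ≤ (nx:ℝ))]
  have he0 : e = 0 := by nlinarith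
  have hFr : F r = 0 := by
    have h2 : (2:ℂ) * F r = F u + F v := by
      rw [← map_ofNat F 2, ← map_mul, ← map_add]
      congr 1; simp only [hu, hv]; ring
    have : F u + F v = 0 := by
      rw [hvconj]
      apply Complex.ext <;> simp [← he, he0]
    have h3 : (2:ℂ) * F r = 0 := by rw [h2, this]
    simpa using h3
  have hr0 : r = 0 := hFinj (by rw [hFr, map_zero])
  have : x + 1 = 0 := by rw [hr, hr0]; ring
  linear_combination this

lemma lattice (f : K →+* ℂ)
    (hN : ∀ x : 𝓞 K, ∃ n : ℤ, (n : ℝ) = Complex.normSq (f x))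
    (ω : 𝓞 K) (hω : ω * ω = -1) (x : 𝓞 K) :
    ∃ p q : ℤ, (f (x : K)).re = (p : ℝ) ∧ (f (x : K)).im = (q : ℝ) := by
  set F : 𝓞 K →+* ℂ := f.comp (algebraMap (𝓞 K) K) with hF
  have hco : ∀ z : 𝓞 K, f (z : K) = F z := fun z => rfl
  have hωC : F ω * F ω = -1 := by
    rw [← map_mul, hω, map_neg, map_one]
  have hsplit : (F ω - Complex.I) * (F ω + Complex.I) = 0 := by
    linear_combination hωC - Complex.I_sq
  obtain ⟨n, hn⟩ := hN x
  rw [hco] at hn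
  obtain ⟨n1, hn1⟩ := hN (x + 1)
  rw [hco, map_add, map_one] at hn1
  have e1 : (n1 : ℝ) = (n : ℝ) + 2 * (F x).re + 1 := by
    rw [hn1, hn, Complex.normSq_apply, Complex.normSq_apply]
    simp
    ring
  have hm : ((n1 - n - 1 : ℤ) : ℝ) = 2 * (F x).re := by push_cast; linarith
  obtain ⟨n2, hn2⟩ := hN (x + ω)
  rw [hco, map_add] at hn2
  have him2 : ∃ m' : ℤ, (m' : ℝ) = 2 * (F x).im := by
    rcases mul_eq_zero.mp hsplit with h | h
    · have hωI : F ω = Complex.I := by linear_combination h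
      refine ⟨n2 - n - 1, ?_⟩
      have e2 : (n2 : ℝ) = (n : ℝ) + 2 * (F x).im + 1 := by
        rw [hn2, hωI, hn, Complex.normSq_apply, Complex.normSq_apply]
        simp
        ring
      push_cast; linarith
    · have hωI : F ω = -Complex.I := by linear_combination h
      refine ⟨-(n2 - n - 1), ?_⟩
      have e2 : (n2 : ℝ) = (n : ℝ) - 2 * (F x).im + 1 := by
        rw [hn2, hωI, hn, Complex.normSq_apply, Complex.normSq_apply]
        simp
        ring
      push_cast; linarith
  obtain ⟨m', hm'⟩ := him2
  have hpar : (n1 - n - 1) * (n1 - n - 1) + m' * m' = 4 * n := by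
    have : (((n1 - n - 1) * (n1 - n - 1) + m' * m' : ℤ) : ℝ) = ((4 * n : ℤ) : ℝ) := by
      push_cast
      rw [show ((n1:ℝ) - n - 1) = 2 * (F x).re by push_cast at hm ⊢; linarith, hm']
      rw [hn, Complex.normSq_apply]
      ring
    exact_mod_cast this
  obtain ⟨⟨p, hp⟩, ⟨q, hq⟩⟩ := par_aux _ _ _ hpar
  refine ⟨p, q, ?_, ?_⟩
  · rw [hco]
    have : ((2 * p : ℤ) : ℝ) = 2 * (F x).re := by rw [← hp]; exact hm
    push_cast at this; linarith
  · rw [hco]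
    have : ((2 * q : ℤ) : ℝ) = 2 * (F x).im := by rw [← hq]; exact hm'
    push_cast at this; linarith

lemma master (hdeg : Module.finrank ℚ K = 2)
    (f : K →+* ℂ) (him : ∃ w : K, (f w).im ≠ 0)
    (a b c : 𝓞 K) (hab : a ≠ b)
    (hac1 : ∃ s : 𝓞 K, a * c + 1 = s ^ 2)
    (hbc1 : ∃ t : 𝓞 K, b * c + 1 = t ^ 2)
    (hab1 : ∃ r : 𝓞 K, a * b + 1 = r ^ 2)
    (habc : a * b * c ≠ 0) :
    ¬ ∃ w : K, ((a : K) * b = w ^ 2) := by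
  rintro ⟨w, hw⟩
  have hN := aux_norm hdeg f him
  set F : 𝓞 K →+* ℂ := f.comp (algebraMap (𝓞 K) K) with hF
  have hco : ∀ z : 𝓞 K, f (z : K) = F z := fun z => rfl
  have hFinj : Function.Injective F := f.injective.comp (IsFractionRing.injective (𝓞 K) K)
  have hc0 : c ≠ 0 := fun h => habc (by rw [h, mul_zero])
  have hab0 : a * b ≠ 0 := fun h => habc (by rw [h, zero_mul])
  -- w is integral
  have hwK : w * w = ((a * b : 𝓞 K) : K) := by
    push_cast
    rw [hw]; ring
  have hwint : IsIntegral ℤ w := by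
    apply IsIntegral.of_pow (n := 2) (by norm_num)
    rw [pow_two, hwK]
    exact RingOfIntegers.isIntegral_coe (a * b)
  set ω : 𝓞 K := ⟨w, hwint⟩ with hωdef
  have hωab : ω * ω = a * b := by
    ext
    push_cast
    exact hwK
  obtain ⟨r, hr⟩ := hab1
  have habneg : a * b = -1 := trap f hN (a * b) ω r hab0 hωab (by rw [hr]; ring)
  have hω : ω * ω = -1 := by rw [hωab, habneg]
  have hlat := lattice f hN ω hω
  -- coordinates
  obtain ⟨pa, qa, hpa, hqa⟩ := hlat a
  obtain ⟨pb, qb, hpb, hqb⟩ := hlat b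
  have hfa : F a = Complex.mk pa qa := by rw [← hco]; exact Complex.ext hpa hqa
  have hfb : F b = Complex.mk pb qb := by rw [← hco]; exact Complex.ext hpb hqb
  have hprod : F a * F b = -1 := by
    rw [← map_mul, habneg, map_neg, map_one]
  rw [hfa, hfb] at hprod
  rw [Complex.ext_iff] at hprod
  simp [Complex.mul_re, Complex.mul_im] at hprod
  obtain ⟨hre, him1⟩ := hprod
  have hreZ : pa * pb - qa * qb = -1 := by exact_mod_cast hre
  have himZ : pa * qb + qa * pb = 0 := by exact_mod_cast him1
  -- norm 1
  have hnormSq : (pa*pa + qa*qa) * (pb*pb + qb*qb) = 1 := by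
    have : ((pa*pa + qa*qa) * (pb*pb + qb*qb) : ℤ) = ((1:ℤ)) := by
      nlinarith [hreZ, himZ]
    exact this
  have hpa0 : 0 ≤ pa*pa + qa*qa := by
    have := mul_self_nonneg pa; have := mul_self_nonneg qa; linarith
  have ha1 : pa*pa + qa*qa = 1 := Int.eq_one_of_mul_eq_one_right hpa0 hnormSq
  -- case analysis on (pa, qa)
  have hpabound : -1 ≤ pa ∧ pa ≤ 1 ∧ -1 ≤ qa ∧ qa ≤ 1 := by
    refine ⟨?_, ?_, ?_, ?_⟩ <;> nlinarith [mul_self_nonneg pa, mul_self_nonneg qa]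
  obtain ⟨h1, h2, h3, h4⟩ := hpabound
  -- from the case analysis: either qa = 0 and pa = ±1, or pa = 0 and qa = ±1
  have hcases : (qa = 0 ∧ (pa = 1 ∨ pa = -1)) ∨ (pa = 0 ∧ (qa = 1 ∨ qa = -1)) := by
    interval_cases pa <;> interval_cases qa <;> omega
  rcases hcases with ⟨hqa0, hpa1⟩ | ⟨hpa0', hqa1⟩
  swap
  · -- pa = 0, qa = ±1 : then f b = f a, so a = b
    exfalso
    apply hab
    apply hFinj
    rw [hfa, hfb]
    have hpb0 : pb = 0 ∧ qb = qa := by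
      rcases hqa1 with h | h <;> subst h <;> subst hpa0' <;> constructor <;> omega
    rw [Complex.ext_iff]
    constructor
    · simp [hpa0', hpb0.1]
    · simp [hpb0.2]
  · -- qa = 0, pa = σ = ±1
    subst hqa0
    have hpbqb : pb = -pa ∧ qb = 0 := by
      rcases hpa1 with h | h <;> subst h <;> constructor <;> omega
    obtain ⟨s, hs⟩ := hac1
    obtain ⟨t, ht⟩ := hbc1
    obtain ⟨ps, qs, hps, hqs⟩ := hlat s
    obtain ⟨pt, qt, hpt, hqt⟩ := hlat t
    obtain ⟨pc, qc, hpc, hqc⟩ := hlat c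
    have hfs : F s = Complex.mk ps qs := by rw [← hco]; exact Complex.ext hps hqs
    have hft : F t = Complex.mk pt qt := by rw [← hco]; exact Complex.ext hpt hqt
    have hfc : F c = Complex.mk pc qc := by rw [← hco]; exact Complex.ext hpc hqc
    -- equations
    have hsC : F a * F c + 1 = F s * F s := by
      rw [← map_mul, ← map_one F, ← map_add, ← map_mul, hs]
      congr 1
      ring
    have htC : F b * F c + 1 = F t * F t := by
      rw [← map_mul, ← map_one F, ← map_add, ← map_mul, ht]
      congr 1
      ring
    rw [hfa, hfc, hfs, Complex.ext_iff] at hsC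
    rw [hfb, hfc, hft, Complex.ext_iff] at htC
    simp [Complex.mul_re, Complex.mul_im, Complex.add_re, Complex.add_im] at hsC htC
    obtain ⟨hs1, hs2⟩ := hsC
    obtain ⟨ht1, ht2⟩ := htC
    have hs1Z : pa * pc + 1 = ps * ps - qs * qs := by exact_mod_cast hs1
    have hs2Z : pa * qc = ps * qs + qs * ps := by exact_mod_cast hs2
    have ht1Z : pb * pc - qb * qc + 1 = pt * pt - qt * qt := by exact_mod_cast ht1
    have ht2Z : pb * qc + qb * pc = pt * qt + qt * pt := by exact_mod_cast ht2
    rw [hpbqb.1, hpbqb.2] at ht1Z ht2Z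
    have g1 : ps*ps - qs*qs + pt*pt - qt*qt = 2 := by linarith
    have g2 : ps*qs + pt*qt = 0 := by linarith
    obtain ⟨gg1, gg2⟩ := gauss_aux ps qs pt qt g1 g2
    -- conclude pc = qc = 0
    have hpc0 : pa * pc = 0 := by linarith
    have hqc0 : pa * qc = 0 := by linarith
    have hpane : pa ≠ 0 := by rcases hpa1 with h | h <;> omega
    have hpc0' : pc = 0 := by
      rcases mul_eq_zero.mp hpc0 with h | h
      · exact absurd h hpane
      · exact h
    have hqc0' : qc = 0 := by
      rcases mul_eq_zero.mp hqc0 with h | h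
      · exact absurd h hpane
      · exact h
    apply hc0
    apply hFinj
    rw [hfc, map_zero, Complex.ext_iff]
    simp [hpc0', hqc0']

end Aux

/-- If `{a, b, c}` is a Diophantine triple in `𝓞 K`, `K` imaginary quadratic, with
`abc ≠ 0`, then none of `ab`, `ac`, `bc` is a square in `K`. -/
theorem stmt_1 (K : Type*) [Field K] [NumberField K]
    (hdeg : Module.finrank ℚ K = 2)
    (f : K →+* ℂ) (him : ∃ w : K, (f w).im ≠ 0)
    (a b c : 𝓞 K) (hab : a ≠ b) (hac : a ≠ c) (hbc : b ≠ c)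
    (hab1 : ∃ r : 𝓞 K, a * b + 1 = r ^ 2)
    (hac1 : ∃ s : 𝓞 K, a * c + 1 = s ^ 2)
    (hbc1 : ∃ t : 𝓞 K, b * c + 1 = t ^ 2)
    (habc : a * b * c ≠ 0) :
    (¬ ∃ w : K, ((a : K) * b = w ^ 2)) ∧
    (¬ ∃ w : K, ((a : K) * c = w ^ 2)) ∧
    (¬ ∃ w : K, ((b : K) * c = w ^ 2)) := by
  obtain ⟨r, hr⟩ := hab1
  obtain ⟨s, hs⟩ := hac1
  obtain ⟨t, ht⟩ := hbc1
  refine ⟨?_, ?_, ?_⟩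
  · exact master hdeg f him a b c hab ⟨s, hs⟩ ⟨t, ht⟩ ⟨r, hr⟩ habc
  · exact master hdeg f him a c b hac ⟨r, hr⟩
      ⟨t, by rw [mul_comm c b]; exact ht⟩ ⟨s, hs⟩
      (by intro h; exact habc (by rw [show a*b*c = a*c*b from by ring, h]))
  · exact master hdeg f him b c a hbc
      ⟨r, by rw [mul_comm b a]; exact hr⟩
      ⟨s, by rw [mul_comm c a]; exact hs⟩ ⟨t, ht⟩
      (by intro h; exact habc (by rw [show a*b*c = b*c*a from by ring, h]))
end

section
/- Let a, c ∈ O_K with ac + 1 = s^2 and suppose |ac| ≥ 16 and |c| > 4|a| (complex absolute values). If (x, z) ∈ O_K × O_K satisfies a z^2 - c x^2 = a - c with z ≠ 0, then for an appropriate choice of sign ε ∈ {1, -1}, |ε (s/a)√(a/c) − (s x)/(a z)| ≤ (|s|·|c−a|)/(|a|·√(|a c|)) · 1/|z|^2, where √(a/c) denotes a fixed complex square root. -/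
open NumberField

lemma key_aux (w t : ℂ) (hw : w ≠ 0) :
    ∃ ε : ℂ, (ε = 1 ∨ ε = -1) ∧
      ‖ε * w - t‖ ≤ ‖w ^ 2 - t ^ 2‖ / ‖w‖ := by
  have hwpos : 0 < ‖w‖ := by simpa using hw
  rcases le_total (‖w - t‖) (‖w + t‖) with h | h
  · refine ⟨1, Or.inl rfl, ?_⟩
    have hle : ‖w‖ ≤ ‖w + t‖ := by
      have h1 := norm_add_le (w - t) (w + t)
      have h2 : ‖(w - t) + (w + t)‖ = 2 * ‖w‖ := by
        rw [show (w - t) + (w + t) = 2 * w by ring, norm_mul]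
        simp
      rw [h2] at h1
      linarith
    rw [one_mul, show w ^ 2 - t ^ 2 = (w - t) * (w + t) by ring, norm_mul,
      le_div_iff₀ hwpos]
    exact mul_le_mul_of_nonneg_left hle (norm_nonneg _)
  · refine ⟨-1, Or.inr rfl, ?_⟩
    have hle : ‖w‖ ≤ ‖w - t‖ := by
      have h1 := norm_add_le (w - t) (w + t)
      have h2 : ‖(w - t) + (w + t)‖ = 2 * ‖w‖ := by
        rw [show (w - t) + (w + t) = 2 * w by ring, norm_mul]
        simp
      rw [h2] at h1
      linarith
    have hneg : ‖-1 * w - t‖ = ‖w + t‖ := by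
      rw [show -1 * w - t = -(w + t) by ring, norm_neg]
    rw [hneg, show w ^ 2 - t ^ 2 = (w - t) * (w + t) by ring, norm_mul,
      le_div_iff₀ hwpos]
    calc ‖w + t‖ * ‖w‖
        ≤ ‖w + t‖ * ‖w - t‖ :=
          mul_le_mul_of_nonneg_left hle (norm_nonneg _)
      _ = ‖w - t‖ * ‖w + t‖ := by ring

/-- Approximation lemma: a solution of `az² − cx² = a − c` gives a good rational
approximation of `±(s/a)√(a/c)`. -/
theorem stmt_3 (K : Type*) [Field K] [NumberField K]
    (hdeg : Module.finrank ℚ K = 2)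
    (f : K →+* ℂ) (him : ∃ w : K, (f w).im ≠ 0)
    (a c s : 𝓞 K) (hs : a * c + 1 = s ^ 2)
    (hac : 16 ≤ ‖f ((a : K) * c)‖)
    (hca : ‖f (c : K)‖ > 4 * ‖f (a : K)‖)
    (x z : 𝓞 K) (hsol : a * z ^ 2 - c * x ^ 2 = a - c) (hz : z ≠ 0)
    (w : ℂ) (hw : w ^ 2 = f (a : K) / f (c : K)) :
    ∃ ε : ℂ, (ε = 1 ∨ ε = -1) ∧
      ‖ε * (f (s : K) / f (a : K)) * w
          - f (s : K) * f (x : K) / (f (a : K) * f (z : K))‖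
        ≤ ‖f (s : K)‖ * ‖f ((c : K) - a)‖
            / (‖f (a : K)‖ * Real.sqrt (‖f ((a : K) * c)‖))
          * (1 / ‖f (z : K)‖ ^ 2) := by
  set A : ℂ := f (a : K) with hAdef
  set C : ℂ := f (c : K) with hCdef
  set S : ℂ := f (s : K) with hSdef
  set X : ℂ := f (x : K) with hXdef
  set Z : ℂ := f (z : K) with hZdef
  have hABne : ‖f ((a : K) * c)‖ = ‖A‖ * ‖C‖ := by
    rw [map_mul, norm_mul]
  have hA : A ≠ 0 := by
    intro h
    rw [hABne, h] at hac
    simp at hac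
    linarith
  have hC : C ≠ 0 := by
    intro h
    rw [hABne, h] at hac
    simp at hac
    linarith
  have hZne : Z ≠ 0 := by
    rw [hZdef]
    simp only [ne_eq, map_eq_zero]
    exact_mod_cast hz
  have hw0 : w ≠ 0 := by
    intro h
    rw [h] at hw
    have : A / C = 0 := by rw [← hw]; ring
    exact hA (by field_simp at this; simpa using this)
  have heq : A * Z ^ 2 - C * X ^ 2 = A - C := by
    have := congrArg (fun u : 𝓞 K => f (u : K)) hsol
    push_cast at this
    simpa using this
  have hwt : w ^ 2 - (X / Z) ^ 2 = (A - C) / (C * Z ^ 2) := by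
    rw [hw, ← heq]
    field_simp
  obtain ⟨ε, hε, hbound⟩ := key_aux w (X / Z) hw0
  refine ⟨ε, hε, ?_⟩
  -- rewrite LHS
  have hLHS : ε * (S / A) * w - S * X / (A * Z) = (S / A) * (ε * w - X / Z) := by
    field_simp
  rw [hLHS, norm_mul, norm_div]
  -- abs of w
  have habsA : 0 < ‖A‖ := norm_pos_iff.mpr hA
  have habsC : 0 < ‖C‖ := norm_pos_iff.mpr hC
  have habsZ : 0 < ‖Z‖ := norm_pos_iff.mpr hZne
  have habsS : 0 ≤ ‖S‖ := norm_nonneg _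
  have hwabs : ‖w‖ = Real.sqrt (‖A‖ * ‖C‖) / ‖C‖ := by
    have h1 : (‖w‖) ^ 2 = ‖A‖ / ‖C‖ := by
      rw [← norm_pow, hw, norm_div]
    have h2 : ‖w‖ = Real.sqrt (‖A‖ / ‖C‖) := by
      rw [← h1, Real.sqrt_sq (norm_nonneg _)]
    rw [h2]
    rw [show ‖A‖ / ‖C‖
        = ‖A‖ * ‖C‖ / (‖C‖) ^ 2 by
      field_simp]
    rw [Real.sqrt_div (by positivity), Real.sqrt_sq (le_of_lt habsC)]
  have hD : ‖f ((c : K) - a)‖ = ‖A - C‖ := by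
    rw [map_sub, ← hCdef, ← hAdef, norm_sub_rev]
  have hsqrtpos : 0 < Real.sqrt (‖A‖ * ‖C‖) :=
    Real.sqrt_pos.mpr (by positivity)
  have key2 : ‖S‖ / ‖A‖
        * (‖w ^ 2 - (X / Z) ^ 2‖ / ‖w‖)
      = ‖S‖ * ‖A - C‖
          / (‖A‖ * Real.sqrt (‖A‖ * ‖C‖))
        * (1 / ‖Z‖ ^ 2) := by
    rw [hwt, hwabs, norm_div, norm_mul, norm_pow]
    field_simp
  rw [hABne, hD]
  calc ‖S‖ / ‖A‖ * ‖ε * w - X / Z‖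
      ≤ ‖S‖ / ‖A‖
          * (‖w ^ 2 - (X / Z) ^ 2‖ / ‖w‖) := by
        exact mul_le_mul_of_nonneg_left hbound (by positivity)
    _ = _ := key2
end

section
/- Let a, b, c be complex numbers with 2 ≤ |a|, |b| ≥ (3/2)|a|, |b| > 5, and |c| > |b|^{15}. Then 210·|b|^3·|b−a|^{3.8}·|a|^{0.8} < (|ac| − 1)^{0.8}. -/
/-- Compare `x ^ p` (real exponent) with a constant by raising to the fifth power. -/
lemma rpow_le_of_pow_five_le {x y : ℝ} (hx : 0 ≤ x) (hy : 0 ≤ y) {p : ℝ}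
    (h : x ^ (5 * p) ≤ y ^ (5 : ℕ)) : x ^ p ≤ y := by
  have hxp : (0:ℝ) ≤ x ^ p := Real.rpow_nonneg hx p
  rw [← pow_le_pow_iff_left₀ hxp hy (by norm_num : (5:ℕ) ≠ 0)]
  calc (x ^ p) ^ (5:ℕ) = x ^ (p * (5:ℕ)) := by
        rw [← Real.rpow_natCast (x ^ p) 5, ← Real.rpow_mul hx]
    _ ≤ y ^ (5:ℕ) := by rw [mul_comm] at h; exact_mod_cast h

lemma le_rpow_of_pow_five_le {x y : ℝ} (hx : 0 ≤ x) (hy : 0 ≤ y) {p : ℝ}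
    (h : y ^ (5 : ℕ) ≤ x ^ (5 * p)) : y ≤ x ^ p := by
  have hxp : (0:ℝ) ≤ x ^ p := Real.rpow_nonneg hx p
  rw [← pow_le_pow_iff_left₀ hy hxp (by norm_num : (5:ℕ) ≠ 0)]
  calc y ^ (5:ℕ) ≤ x ^ (5 * p) := h
    _ = (x ^ p) ^ (5:ℕ) := by
        rw [← Real.rpow_natCast (x ^ p) 5, ← Real.rpow_mul hx, mul_comm]; norm_num

/-- Inequality (3) in the proof of the gap principle. -/
theorem stmt_9 (a b c : ℂ) (ha : 2 ≤ ‖a‖)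
    (hba : ‖b‖ ≥ (3 / 2) * ‖a‖) (hb : 5 < ‖b‖)
    (hc : ‖c‖ > ‖b‖ ^ (15 : ℝ)) :
    210 * ‖b‖ ^ (3 : ℝ) * ‖b - a‖ ^ (3.8 : ℝ)
        * ‖a‖ ^ (0.8 : ℝ)
      < (‖a * c‖ - 1) ^ (0.8 : ℝ) := by
  set A := ‖a‖ with hA
  set B := ‖b‖ with hB
  set C := ‖c‖ with hCdef
  have hA0 : (0:ℝ) < A := lt_of_lt_of_le (by norm_num) ha
  have hB0 : (0:ℝ) < B := by linarith
  have hC0 : (0:ℝ) ≤ C := norm_nonneg c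
  have hAB : A ≤ 2/3 * B := by linarith
  have hsub : ‖b - a‖ ≤ 5/3 * B := by
    have := norm_sub_le b a
    linarith
  have hsub0 : (0:ℝ) ≤ ‖b - a‖ := norm_nonneg _
  -- constant bounds
  have c1 : ((5:ℝ)/3) ^ (3.8:ℝ) ≤ 7 := by
    apply rpow_le_of_pow_five_le (by norm_num) (by norm_num)
    rw [show (5 * (3.8:ℝ)) = ((19:ℕ):ℝ) by norm_num, Real.rpow_natCast]
    norm_num
  have c2 : ((2:ℝ)/3) ^ (0.8:ℝ) ≤ 0.73 := by
    apply rpow_le_of_pow_five_le (by norm_num) (by norm_num)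
    rw [show (5 * (0.8:ℝ)) = ((4:ℕ):ℝ) by norm_num, Real.rpow_natCast]
    norm_num
  have c3 : (1100:ℝ) ≤ (5:ℝ) ^ (4.4:ℝ) := by
    apply le_rpow_of_pow_five_le (by norm_num) (by norm_num)
    rw [show (5 * (4.4:ℝ)) = ((22:ℕ):ℝ) by norm_num, Real.rpow_natCast]
    norm_num
  -- bound the left-hand side by 1073.1 * B ^ 7.6
  have hLHS : 210 * B ^ (3:ℝ) * ‖b - a‖ ^ (3.8:ℝ) * A ^ (0.8:ℝ)
      ≤ 1073.1 * B ^ (7.6:ℝ) := by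
    have h1 : ‖b - a‖ ^ (3.8:ℝ) ≤ (5/3) ^ (3.8:ℝ) * B ^ (3.8:ℝ) := by
      rw [← Real.mul_rpow (by norm_num) hB0.le]
      exact Real.rpow_le_rpow hsub0 hsub (by norm_num)
    have h2 : A ^ (0.8:ℝ) ≤ (2/3) ^ (0.8:ℝ) * B ^ (0.8:ℝ) := by
      rw [← Real.mul_rpow (by norm_num) hB0.le]
      exact Real.rpow_le_rpow hA0.le hAB (by norm_num)
    have hBsum : B ^ (3:ℝ) * B ^ (3.8:ℝ) * B ^ (0.8:ℝ) = B ^ (7.6:ℝ) := by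
      rw [← Real.rpow_add hB0, ← Real.rpow_add hB0]; norm_num
    calc 210 * B ^ (3:ℝ) * ‖b - a‖ ^ (3.8:ℝ) * A ^ (0.8:ℝ)
        ≤ 210 * B ^ (3:ℝ) * ((5/3) ^ (3.8:ℝ) * B ^ (3.8:ℝ))
            * ((2/3) ^ (0.8:ℝ) * B ^ (0.8:ℝ)) := by
          apply mul_le_mul (mul_le_mul_of_nonneg_left h1 (by positivity)) h2
            (Real.rpow_nonneg hA0.le _) (by positivity)
      _ = (5/3) ^ (3.8:ℝ) * (2/3) ^ (0.8:ℝ)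
            * (210 * (B ^ (3:ℝ) * B ^ (3.8:ℝ) * B ^ (0.8:ℝ))) := by ring
      _ ≤ 7 * 0.73 * (210 * B ^ (7.6:ℝ)) := by
          rw [mul_assoc, mul_assoc] at *
          have hBpos : (0:ℝ) ≤ 210 * (B ^ (3:ℝ) * B ^ (3.8:ℝ) * B ^ (0.8:ℝ)) := by positivity
          calc (5/3) ^ (3.8:ℝ) * ((2/3) ^ (0.8:ℝ)
                * (210 * (B ^ (3:ℝ) * (B ^ (3.8:ℝ) * B ^ (0.8:ℝ)))))
              ≤ 7 * (0.73 * (210 * B ^ (7.6:ℝ))) := by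
                have key : (2/3:ℝ) ^ (0.8:ℝ) * (210 * (B ^ (3:ℝ) * (B ^ (3.8:ℝ) * B ^ (0.8:ℝ))))
                    ≤ 0.73 * (210 * B ^ (7.6:ℝ)) := by
                  have : B ^ (3:ℝ) * (B ^ (3.8:ℝ) * B ^ (0.8:ℝ)) = B ^ (7.6:ℝ) := by
                    rw [← Real.rpow_add hB0, ← Real.rpow_add hB0]; norm_num
                  rw [this]
                  exact mul_le_mul_of_nonneg_right c2 (by positivity)
                exact mul_le_mul c1 key (by positivity) (by norm_num)
            _ = 7 * 0.73 * (210 * B ^ (7.6:ℝ)) := by ring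
      _ = 1073.1 * B ^ (7.6:ℝ) := by ring
  -- the right-hand side is greater than B ^ 12
  have hB1 : (1:ℝ) ≤ B ^ (15:ℝ) := Real.one_le_rpow (by linarith) (by norm_num)
  have hac : ‖a * c‖ = A * C := norm_mul _ _
  have hACgt : B ^ (15:ℝ) < A * C - 1 := by
    have h2C : 2 * C ≤ A * C := mul_le_mul_of_nonneg_right ha hC0
    have : 2 * B ^ (15:ℝ) < 2 * C := by linarith
    nlinarith
  have hRHS : B ^ (12:ℝ) < (‖a * c‖ - 1) ^ (0.8:ℝ) := by
    rw [hac]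
    have := Real.rpow_lt_rpow (Real.rpow_nonneg hB0.le 15) hACgt (by norm_num : (0:ℝ) < 0.8)
    calc B ^ (12:ℝ) = (B ^ (15:ℝ)) ^ (0.8:ℝ) := by
          rw [← Real.rpow_mul hB0.le]; norm_num
      _ < (A * C - 1) ^ (0.8:ℝ) := this
  -- combine
  have hmid : 1073.1 * B ^ (7.6:ℝ) < B ^ (12:ℝ) := by
    have hexp : B ^ (12:ℝ) = B ^ (4.4:ℝ) * B ^ (7.6:ℝ) := by
      rw [← Real.rpow_add hB0]; norm_num
    have h44 : (1100:ℝ) ≤ B ^ (4.4:ℝ) :=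
      le_trans c3 (Real.rpow_le_rpow (by norm_num) hb.le (by norm_num))
    have h76 : (0:ℝ) < B ^ (7.6:ℝ) := Real.rpow_pos_of_pos hB0 _
    rw [hexp]
    calc 1073.1 * B ^ (7.6:ℝ) < 1100 * B ^ (7.6:ℝ) := by nlinarith
      _ ≤ B ^ (4.4:ℝ) * B ^ (7.6:ℝ) := mul_le_mul_of_nonneg_right h44 h76.le
  linarith
end

section
/- Let {a, b, c, d} be a Diophantine quadruple in the ring of integers O_K of an imaginary quadratic field with 2 ≤ |a| ≤ |b| ≤ |c| ≤ |d| (complex absolute values). If ab + 1 = r^2, then it is impossible that simultaneously c = a + b − 2r and d = a + b + 2r. -/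
open NumberField

-- norm = normSq of embedding for imaginary quadratic
private lemma norm_eq_normSq {K : Type*} [Field K] [NumberField K]
    (hdeg : Module.finrank ℚ K = 2)
    (f : K →+* ℂ) (him : ∃ w : K, (f w).im ≠ 0) (z : 𝓞 K) :
    ((Algebra.norm ℤ z : ℤ) : ℝ) = Complex.normSq (f (z : K)) := by
  obtain ⟨w, hw⟩ := him
  have hcard : Fintype.card (K →ₐ[ℚ] ℂ) = 2 := by
    rw [AlgHom.card]; exact hdeg
  set F : K →ₐ[ℚ] ℂ := RingHom.equivRatAlgHom K ℂ f with hF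
  set G : K →ₐ[ℚ] ℂ := RingHom.equivRatAlgHom K ℂ ((starRingEnd ℂ).comp f) with hG
  classical
  have hFapp : ∀ y : K, F y = f y := fun y => rfl
  have hGapp : ∀ y : K, G y = (starRingEnd ℂ) (f y) := fun y => rfl
  have hFG : F ≠ G := by
    intro h
    apply hw
    have := congrArg (fun φ : K →ₐ[ℚ] ℂ => (φ w).im) h
    simp only [hFapp, hGapp, Complex.conj_im] at this
    linarith
  have huniv : (Finset.univ : Finset (K →ₐ[ℚ] ℂ)) = {F, G} := by
    symm
    apply Finset.eq_of_subset_of_card_le (Finset.subset_univ _)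
    rw [Finset.card_univ, hcard, Finset.card_pair hFG]
  have hprod := Algebra.norm_eq_prod_embeddings ℚ ℂ (z : K)
  rw [huniv, Finset.prod_pair hFG, hFapp, hGapp, Complex.mul_conj] at hprod
  have : ((Algebra.norm ℤ z : ℚ) : ℂ) = (Complex.normSq (f (z : K)) : ℂ) := by
    rw [Algebra.coe_norm_int, ← eq_ratCast ((algebraMap ℚ ℂ)) (Algebra.norm ℚ (z : K))]
    exact hprod
  have : ((Algebra.norm ℤ z : ℝ) : ℂ) = ((Complex.normSq (f (z : K)) : ℝ) : ℂ) := by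
    exact_mod_cast this
  exact_mod_cast this

private lemma sq_le_24 (n : ℤ) (h : n*n ≤ 24) : -4 ≤ n ∧ n ≤ 4 := by
  constructor <;> nlinarith

private lemma real_sq_le_5 {t : ℝ} (h0 : 0 ≤ t) (h : t ^ 2 ≤ 25) : t ≤ 5 := by nlinarith

private lemma real_le_sq_36 {t : ℝ} (h0 : 0 ≤ t) (h : t ≤ 6) : t ^ 2 ≤ 36 := by nlinarith

private lemma int_sq_le_6 {n : ℤ} (h0 : 0 ≤ n) (h : n ^ 2 ≤ 36) : n ≤ 6 := by nlinarith

private lemma dioph_int_case (U V S T na nb nr : ℤ)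
    (h1 : U*U + (V+2)*(V+2) = 4*na)
    (h2 : U*U + V*V = 4*nb)
    (h3 : S*S + T*T = 4*nr)
    (h4 : 4 ≤ na) (h5 : na ≤ nb) (h6 : nb ≤ 5) (h7 : nr ≤ 6)
    (h8 : S*S - T*T = U*U - (V+2)*V + 4)
    (h9 : 2*(S*T) = U*V + (V+2)*U) : False := by
  obtain ⟨hU1, hU2⟩ := sq_le_24 U (by linarith [mul_self_nonneg V])
  obtain ⟨hV1, hV2⟩ := sq_le_24 V (by linarith [mul_self_nonneg U])
  obtain ⟨hS1, hS2⟩ := sq_le_24 S (by linarith [mul_self_nonneg T])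
  obtain ⟨hT1, hT2⟩ := sq_le_24 T (by linarith [mul_self_nonneg S])
  interval_cases U <;> interval_cases V <;>
    first
      | omega
      | (interval_cases S <;> interval_cases T <;> omega)


set_option maxHeartbeats 1000000 in
/-- In a Diophantine quadruple `{a, b, c, d}` in `𝓞 K` with `2 ≤ |a| ≤ |b| ≤ |c| ≤ |d|`
and `ab + 1 = r²`, it is impossible that both `c = a + b − 2r` and `d = a + b + 2r`. -/
theorem stmt_12 (K : Type*) [Field K] [NumberField K]
    (hdeg : Module.finrank ℚ K = 2)
    (f : K →+* ℂ) (him : ∃ w : K, (f w).im ≠ 0)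
    (a b c d : 𝓞 K)
    (ha0 : a ≠ 0) (hb0 : b ≠ 0) (hc0 : c ≠ 0) (hd0 : d ≠ 0)
    (hab : a ≠ b) (hac : a ≠ c) (had : a ≠ d) (hbc : b ≠ c) (hbd : b ≠ d) (hcd : c ≠ d)
    (hab1 : ∃ r : 𝓞 K, a * b + 1 = r ^ 2)
    (hac1 : ∃ s : 𝓞 K, a * c + 1 = s ^ 2)
    (had1 : ∃ u : 𝓞 K, a * d + 1 = u ^ 2)
    (hbc1 : ∃ t : 𝓞 K, b * c + 1 = t ^ 2)
    (hbd1 : ∃ v : 𝓞 K, b * d + 1 = v ^ 2)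
    (hcd1 : ∃ w : 𝓞 K, c * d + 1 = w ^ 2)
    (h2a : 2 ≤ ‖f (a : K)‖)
    (hab' : ‖f (a : K)‖ ≤ ‖f (b : K)‖)
    (hbc' : ‖f (b : K)‖ ≤ ‖f (c : K)‖)
    (hcd' : ‖f (c : K)‖ ≤ ‖f (d : K)‖)
    (r : 𝓞 K) (hr : a * b + 1 = r ^ 2) :
    ¬ (c = a + b - 2 * r ∧ d = a + b + 2 * r) := by
  rintro ⟨hc, hd⟩
  obtain ⟨w, hw⟩ := hcd1
  set F : 𝓞 K →+* ℂ := f.comp (algebraMap (𝓞 K) K) with hFdef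
  have hFapp : ∀ z : 𝓞 K, F z = f (z : K) := fun z => rfl
  set N : 𝓞 K → ℤ := fun z => Algebra.norm ℤ z with hNdef
  have hNval : ∀ z : 𝓞 K, ((N z : ℤ) : ℝ) = Complex.normSq (F z) :=
    fun z => norm_eq_normSq hdeg f him z
  have hNnonneg : ∀ z : 𝓞 K, (0:ℤ) ≤ N z := by
    intro z
    have h := hNval z
    have := Complex.normSq_nonneg (F z)
    rw [← h] at this
    exact_mod_cast this
  have hFinj : Function.Injective F := by
    intro y z h
    exact RingOfIntegers.coe_injective (f.injective h)
  have hNmul : ∀ y z : 𝓞 K, N (y * z) = N y * N z := fun y z => map_mul (Algebra.norm ℤ) y z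
  have hNpos : ∀ z : 𝓞 K, z ≠ 0 → 1 ≤ N z := by
    intro z hz
    have h1 : F z ≠ 0 := fun h => hz (hFinj (h.trans (map_zero F).symm))
    have h2 : Complex.normSq (F z) ≠ 0 := fun h => h1 (Complex.normSq_eq_zero.mp h)
    have h3 : N z ≠ 0 := by
      intro h
      apply h2
      rw [← hNval z, h]
      norm_num
    have := hNnonneg z
    omega
  -- abs facts
  have habsc : 2 ≤ ‖F c‖ := le_trans h2a (le_trans hab' hbc')
  have habsd : 2 ≤ ‖F d‖ := le_trans habsc hcd'
  -- norms ≥ 4 for a b c d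
  have hsq : ∀ z : 𝓞 K, 2 ≤ ‖F z‖ → 4 ≤ N z := by
    intro z hz
    have h1 : (4:ℝ) ≤ Complex.normSq (F z) := by
      rw [← Complex.sq_norm]
      nlinarith
    rw [← hNval z] at h1
    exact_mod_cast h1
  have hmono : ∀ y z : 𝓞 K, ‖F y‖ ≤ ‖F z‖ → N y ≤ N z := by
    intro y z h
    have h1 : Complex.normSq (F y) ≤ Complex.normSq (F z) := by
      rw [← Complex.sq_norm, ← Complex.sq_norm]
      nlinarith [norm_nonneg (F y)]
    rw [← hNval y, ← hNval z] at h1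
    exact_mod_cast h1
  have hNc4 : 4 ≤ N c := hsq c habsc
  have hNd4 : 4 ≤ N d := hsq d habsd
  have hNa4 : 4 ≤ N a := hsq a h2a
  have hNab : N a ≤ N b := hmono a b hab'
  have hNbc : N b ≤ N c := hmono b c hbc'
  have hNcd : N c ≤ N d := hmono c d hcd'
  -- cd = (a-b)^2 - 4
  have hcd_eq : c * d = (a - b) ^ 2 - 4 := by
    rw [hc, hd]; linear_combination 4 * hr
  have hw2 : w ^ 2 = (a - b) ^ 2 - 3 := by linear_combination hcd_eq - hw
  have hpq : (a - b - w) * (a - b + w) = 3 := by linear_combination hw - hcd_eq - hw2 + hw2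
  have hx0 : a - b ≠ 0 := sub_ne_zero.mpr hab
  set x := a - b with hxdef
  clear_value x
  -- N 3 = 9
  have hN3 : N (3 : 𝓞 K) = 9 := by
    have h := hNval (3 : 𝓞 K)
    rw [map_ofNat] at h
    have h2 : Complex.normSq (3 : ℂ) = 9 := by
      simp [Complex.normSq_apply]
      norm_num
    rw [h2] at h
    exact_mod_cast h
  have hnpq : N (x - w) * N (x + w) = 9 := by
    rw [← hNmul, hpq, hN3]
  -- parallelogram
  have hpar : 4 * N x + 4 * N w = 2 * N (x - w) + 2 * N (x + w) := by
    have key : ∀ P Q : ℂ, Complex.normSq (P + Q) + Complex.normSq (Q - P) =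
        2 * Complex.normSq P + 2 * Complex.normSq Q := by
      intro P Q
      simp only [Complex.normSq_apply, Complex.add_re, Complex.add_im, Complex.sub_re,
        Complex.sub_im]
      ring
    have h1 : F (x - w) + F (x + w) = 2 * F x := by
      rw [← map_ofNat F 2, ← map_mul, ← map_add]
      congr 1
      ring
    have h2 : F (x + w) - F (x - w) = 2 * F w := by
      rw [← map_ofNat F 2, ← map_mul, ← map_sub]
      congr 1
      ring
    have h3 := key (F (x - w)) (F (x + w))
    rw [h1, h2] at h3
    have h4 : Complex.normSq (2 * F x) = 4 * Complex.normSq (F x) := by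
      rw [map_mul]
      norm_num [Complex.normSq_apply]
    have h5 : Complex.normSq (2 * F w) = 4 * Complex.normSq (F w) := by
      rw [map_mul]
      norm_num [Complex.normSq_apply]
    rw [h4, h5] at h3
    have h6 : (4:ℝ) * N x + 4 * N w = 2 * N (x - w) + 2 * N (x + w) := by
      rw [hNval, hNval, hNval, hNval]
      linarith
    exact_mod_cast h6
  -- N w ≥ 3
  have hNw3 : 3 ≤ N w := by
    have h1 : ‖F c * F d‖ ≤ ‖F c * F d + 1‖ + 1 := by
      calc ‖F c * F d‖ = ‖(F c * F d + 1) + (-1)‖ := by ring_nf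
        _ ≤ ‖F c * F d + 1‖ + ‖-1‖ := norm_add_le _ _
        _ = ‖F c * F d + 1‖ + 1 := by norm_num
    have h2 : (4:ℝ) ≤ ‖F c * F d‖ := by
      rw [norm_mul]
      nlinarith [norm_nonneg (F c), norm_nonneg (F d)]
    have h3 : F (w ^ 2) = F c * F d + 1 := by
      rw [← hw, map_add, map_mul, map_one]
    have h4 : ‖F (w ^ 2)‖ = Complex.normSq (F w) := by
      rw [map_pow, ← Complex.sq_norm]
      norm_num
    have h5 : (3:ℝ) ≤ Complex.normSq (F w) := by
      rw [← h4, h3]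
      linarith
    rw [← hNval w] at h5
    exact_mod_cast h5
  have hNx1 : 1 ≤ N x := hNpos _ hx0
  -- sum of N p, N q
  have hNp1 : 1 ≤ N (x - w) := by
    have h0 := hNnonneg (x - w)
    have h1 : N (x - w) ≠ 0 := by
      intro h
      rw [h] at hnpq
      omega
    omega
  have hNq1 : 1 ≤ N (x + w) := by
    have h0 := hNnonneg (x + w)
    have h1 : N (x + w) ≠ 0 := by
      intro h
      rw [h] at hnpq
      omega
    omega
  have hNp9 : N (x - w) ≤ 9 := by nlinarith
  have hsum : N (x - w) + N (x + w) = 6 ∨ N (x - w) + N (x + w) = 10 := by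
    set np := N (x - w)
    set nq := N (x + w)
    clear_value np nq
    interval_cases np <;> omega
  have hcase : (N x = 2 ∧ N w = 3) ∨ (N x = 1 ∧ N w = 4) := by omega
  -- facts about X := F x ^ 2
  have hXnormSq : Complex.normSq (F x ^ 2) = ((N x : ℤ) : ℝ) ^ 2 := by
    rw [map_pow Complex.normSq, hNval]
  have hX3 : Complex.normSq (F x ^ 2 - 3) = ((N w : ℤ) : ℝ) ^ 2 := by
    have h1 : F x ^ 2 - 3 = F (w ^ 2) := by
      rw [hw2, map_sub, map_pow, map_ofNat]
    rw [h1, map_pow, map_pow Complex.normSq, hNval]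
  have hX4 : (16:ℝ) ≤ Complex.normSq (F x ^ 2 - 4) := by
    have h1 : F x ^ 2 - 4 = F (c * d) := by
      rw [hcd_eq, map_sub, map_pow, map_ofNat]
    have h2 : (16:ℤ) ≤ N (c * d) := by
      rw [hNmul]
      nlinarith
    rw [h1, ← hNval]
    exact_mod_cast h2
  rcases hcase with ⟨hnx, hnw⟩ | ⟨hnx, hnw⟩
  · -- case N x = 2, N w = 3 : contradiction over ℝ
    rw [hnx] at hXnormSq
    rw [hnw] at hX3
    have e1 : ((F x ^ 2).re - 3) ^ 2 + (F x ^ 2).im ^ 2 = 9 := by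
      have h := hX3
      simp only [Complex.normSq_apply, Complex.sub_re, Complex.sub_im, Complex.re_ofNat,
        Complex.im_ofNat] at h
      push_cast at h
      linear_combination h
    have e2 : (F x ^ 2).re ^ 2 + (F x ^ 2).im ^ 2 = 4 := by
      have h := hXnormSq
      simp only [Complex.normSq_apply] at h
      push_cast at h
      linear_combination h
    have e3 : (16:ℝ) ≤ ((F x ^ 2).re - 4) ^ 2 + (F x ^ 2).im ^ 2 := by
      have h := hX4
      simp only [Complex.normSq_apply, Complex.sub_re, Complex.sub_im, Complex.re_ofNat,
        Complex.im_ofNat] at h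
      nlinarith [h]
    linarith [e1, e2, e3]
  · -- case N x = 1, N w = 4 : x^2 = -1
    rw [hnx] at hXnormSq
    rw [hnw] at hX3
    have e1 : ((F x ^ 2).re - 3) ^ 2 + (F x ^ 2).im ^ 2 = 16 := by
      have h := hX3
      simp only [Complex.normSq_apply, Complex.sub_re, Complex.sub_im, Complex.re_ofNat,
        Complex.im_ofNat] at h
      push_cast at h
      linear_combination h
    have e2 : (F x ^ 2).re ^ 2 + (F x ^ 2).im ^ 2 = 1 := by
      have h := hXnormSq
      simp only [Complex.normSq_apply] at h
      push_cast at h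
      linear_combination h
    have hre : (F x ^ 2).re = -1 := by linarith [e1, e2]
    have him0 : (F x ^ 2).im = 0 := by
      have h1 : (F x ^ 2).im ^ 2 = 0 := by nlinarith [e2, hre]
      exact sq_eq_zero_iff.mp h1
    have hXeq : F x ^ 2 = -1 := by
      apply Complex.ext <;>
        simp only [Complex.neg_re, Complex.neg_im, Complex.one_re, Complex.one_im, hre, him0] <;>
        norm_num
    have hx2 : x ^ 2 = -1 := by
      apply hFinj
      rw [map_pow, hXeq, map_neg, map_one]
    -- final case: x^2 = -1
    have hn1 : Complex.normSq (F x) = 1 := by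
      rw [← hNval x, hnx]
      norm_num
    have hmulre : (F x).re * (F x).re - (F x).im * (F x).im = -1 := by
      have h := congrArg Complex.re hXeq
      simp only [pow_two, Complex.mul_re, Complex.neg_re, Complex.one_re] at h
      linarith
    have hn1' : (F x).re * (F x).re + (F x).im * (F x).im = 1 := by
      rw [← Complex.normSq_apply, hn1]
    have hIre : (F x).re = 0 := by
      have h : (F x).re * (F x).re = 0 := by linarith
      exact mul_self_eq_zero.mp h
    have hIim2 : (F x).im * (F x).im = 1 := by linarith [hmulre, hn1', hIre]
    -- c * d = -5 and N c = N d = 5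
    have hcd5 : c * d = -5 := by rw [hcd_eq, hx2]; ring
    have hN5 : N (-5 : 𝓞 K) = 25 := by
      have h := hNval (-5 : 𝓞 K)
      rw [map_neg, map_ofNat] at h
      have h2 : Complex.normSq (-(5:ℂ)) = 25 := by
        simp [Complex.normSq_apply]
        norm_num
      rw [h2] at h
      exact_mod_cast h
    have hNcd25 : N c * N d = 25 := by rw [← hNmul, hcd5, hN5]
    have hNc5 : N c = 5 ∧ N d = 5 := by
      have h1 : N c ≤ 5 := by
        by_contra hcon
        push_neg at hcon
        have h66 : (6:ℤ) * 6 ≤ N c * N d :=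
          mul_le_mul hcon (le_trans hcon hNcd) (by norm_num) (le_trans (by norm_num) hcon)
        rw [hNcd25] at h66
        norm_num at h66
      have h2 : N c = 4 ∨ N c = 5 := by omega
      rcases h2 with h | h
      · rw [h] at hNcd25; omega
      · rw [h] at hNcd25; omega
    have hNb5 : N b ≤ 5 := by omega
    -- integer coordinates (doubled)
    have hA : ∀ z : 𝓞 K, ((N (z + 1) - N z - 1 : ℤ) : ℝ) = 2 * (F z).re := by
      intro z
      have h1 := hNval (z + 1)
      rw [map_add, map_one] at h1
      have h2 := hNval z
      push_cast
      rw [h1, h2]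
      simp only [Complex.normSq_apply, Complex.add_re, Complex.add_im, Complex.one_re,
        Complex.one_im]
      ring
    have hB : ∀ z : 𝓞 K, ((-(N (z * x + 1) - N (z * x) - 1) : ℤ) : ℝ) =
        2 * (F z).im * (F x).im := by
      intro z
      have h := hA (z * x)
      rw [map_mul, Complex.mul_re, hIre] at h
      push_cast
      push_cast at h
      linarith [h]
    obtain ⟨Ua, hUa⟩ : ∃ m : ℤ, (m : ℝ) = 2 * (F a).re := ⟨_, hA a⟩
    obtain ⟨Ub, hUb⟩ : ∃ m : ℤ, (m : ℝ) = 2 * (F b).re := ⟨_, hA b⟩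
    obtain ⟨S, hS⟩ : ∃ m : ℤ, (m : ℝ) = 2 * (F r).re := ⟨_, hA r⟩
    obtain ⟨Va, hVa⟩ : ∃ m : ℤ, (m : ℝ) = 2 * (F a).im * (F x).im := ⟨_, hB a⟩
    obtain ⟨Vb, hVb⟩ : ∃ m : ℤ, (m : ℝ) = 2 * (F b).im * (F x).im := ⟨_, hB b⟩
    obtain ⟨T, hT⟩ : ∃ m : ℤ, (m : ℝ) = 2 * (F r).im * (F x).im := ⟨_, hB r⟩
    -- complex equations
    have hFab : F a = F b + F x := by
      have h : b + x = a := by rw [hxdef]; ring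
      rw [← h, map_add]
    have hrC : F r ^ 2 = F a * F b + 1 := by
      rw [← map_pow, ← hr, map_add, map_mul, map_one]
    have hre1 : (F a).re = (F b).re + (F x).re := by rw [hFab, Complex.add_re]
    have him1 : (F a).im = (F b).im + (F x).im := by rw [hFab, Complex.add_im]
    have hre2 : (F r).re * (F r).re - (F r).im * (F r).im =
        (F a).re * (F b).re - (F a).im * (F b).im + 1 := by
      have h := congrArg Complex.re hrC
      simp only [pow_two, Complex.mul_re, Complex.add_re, Complex.one_re] at h
      linarith
    have him2 : (F r).re * (F r).im + (F r).im * (F r).re =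
        (F a).re * (F b).im + (F a).im * (F b).re := by
      have h := congrArg Complex.im hrC
      simp only [pow_two, Complex.mul_im, Complex.add_im, Complex.one_im] at h
      linarith
    -- integer norm identities
    have hna : ((N a : ℤ) : ℝ) = (F a).re * (F a).re + (F a).im * (F a).im := by
      rw [hNval, Complex.normSq_apply]
    have hnb : ((N b : ℤ) : ℝ) = (F b).re * (F b).re + (F b).im * (F b).im := by
      rw [hNval, Complex.normSq_apply]
    have hnr : ((N r : ℤ) : ℝ) = (F r).re * (F r).re + (F r).im * (F r).im := by
      rw [hNval, Complex.normSq_apply]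
    have i1 : Ua = Ub := by
      have h : (Ua : ℝ) = (Ub : ℝ) := by
        rw [hUa, hUb, hre1, hIre]
        ring
      exact_mod_cast h
    have i2 : Va = Vb + 2 := by
      have h : (Va : ℝ) = (Vb : ℝ) + 2 := by
        rw [hUa] at hUa
        rw [hVa, hVb]
        linear_combination (2 * (F x).im) * him1 + 2 * hIim2
      exact_mod_cast h
    have i3 : Ua * Ua + Va * Va = 4 * N a := by
      have h : (Ua : ℝ) * Ua + (Va : ℝ) * Va = 4 * ((N a : ℤ) : ℝ) := by
        rw [hUa, hVa]
        linear_combination (-4 : ℝ) * hna + (4 * (F a).im * (F a).im) * hIim2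
      exact_mod_cast h
    have i4 : Ub * Ub + Vb * Vb = 4 * N b := by
      have h : (Ub : ℝ) * Ub + (Vb : ℝ) * Vb = 4 * ((N b : ℤ) : ℝ) := by
        rw [hUb, hVb]
        linear_combination (-4 : ℝ) * hnb + (4 * (F b).im * (F b).im) * hIim2
      exact_mod_cast h
    have i5 : S * S + T * T = 4 * N r := by
      have h : (S : ℝ) * S + (T : ℝ) * T = 4 * ((N r : ℤ) : ℝ) := by
        rw [hS, hT]
        linear_combination (-4 : ℝ) * hnr + (4 * (F r).im * (F r).im) * hIim2
      exact_mod_cast h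
    have i6 : S * S - T * T = Ua * Ub - Va * Vb + 4 := by
      have h : (S : ℝ) * S - (T : ℝ) * T = (Ua : ℝ) * Ub - (Va : ℝ) * Vb + 4 := by
        rw [hS, hT, hUa, hUb, hVa, hVb]
        linear_combination (4 : ℝ) * hre2 +
          (4 * (F a).im * (F b).im - 4 * (F r).im * (F r).im) * hIim2
      exact_mod_cast h
    have i7 : 2 * (S * T) = Ua * Vb + Va * Ub := by
      have h : 2 * ((S : ℝ) * T) = (Ua : ℝ) * Vb + (Va : ℝ) * Ub := by
        rw [hS, hT, hUa, hUb, hVa, hVb]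
        linear_combination (4 * (F x).im) * him2
      exact_mod_cast h
    -- bound on N r
    have hNr6 : N r ≤ 6 := by
      have h1 : (N a : ℤ) * N b ≤ 25 := by
        have ha5 : N a ≤ 5 := by omega
        have := mul_le_mul ha5 hNb5 (hNnonneg b) (by norm_num : (0:ℤ) ≤ 5)
        linarith
      have h1' : ((N a : ℤ) : ℝ) * ((N b : ℤ) : ℝ) ≤ 25 := by exact_mod_cast h1
      have h2 : ‖F a * F b‖ ^ 2 ≤ 25 := by
        rw [Complex.sq_norm, map_mul Complex.normSq, ← hNval a, ← hNval b]
        exact h1'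
      have h3 : ‖F a * F b‖ ≤ 5 :=
        real_sq_le_5 (norm_nonneg _) h2
      have h4 : ‖F r ^ 2‖ ≤ 6 := by
        rw [hrC]
        calc ‖F a * F b + 1‖ ≤ ‖F a * F b‖ + ‖(1:ℂ)‖ :=
              norm_add_le _ _
          _ ≤ 6 := by rw [norm_one]; linarith
      have h5 : Complex.normSq (F r ^ 2) ≤ 36 := by
        rw [← Complex.sq_norm]
        exact real_le_sq_36 (norm_nonneg _) h4
      rw [map_pow Complex.normSq, ← hNval r] at h5
      have h6 : (N r) ^ 2 ≤ 36 := by exact_mod_cast h5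
      exact int_sq_le_6 (hNnonneg r) h6
    -- assemble the integer contradiction
    rw [i2] at i3
    rw [← i1] at i4
    rw [← i1, i2] at i6 i7
    exact dioph_int_case Ua Vb S T (N a) (N b) (N r) i3 i4 i5 hNa4 hNab hNb5 hNr6 i6 i7
end

section
/- Let {a, b, c, d} be a Diophantine quadruple in O_K with 2 ≤ |a| ≤ |b| ≤ |c| ≤ |d| (complex absolute values), and suppose d ≠ a + b ± 2r where ab + 1 = r^2 (i.e., {a, b, d} is not a regular triple). Set c± = a + b + d + 2abd ± 2rxy, where ad+1 = x^2 and bd+1 = y^2. Then c+ ≠ 0 and c− ≠ 0. -/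
open NumberField

/-- If `{a, b, c, d}` is a Diophantine quadruple with `2 ≤ |a| ≤ |b| ≤ |c| ≤ |d|` and
`{a, b, d}` is not a regular triple, then `c₊ = a+b+d+2abd+2rxy ≠ 0` and
`c₋ = a+b+d+2abd−2rxy ≠ 0`. -/
theorem stmt_15 (K : Type*) [Field K] [NumberField K]
    (hdeg : Module.finrank ℚ K = 2)
    (f : K →+* ℂ) (him : ∃ w : K, (f w).im ≠ 0)
    (a b c d : 𝓞 K)
    (ha0 : a ≠ 0) (hb0 : b ≠ 0) (hc0 : c ≠ 0) (hd0 : d ≠ 0)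
    (hab : a ≠ b) (hac : a ≠ c) (had : a ≠ d) (hbc : b ≠ c) (hbd : b ≠ d) (hcd : c ≠ d)
    (hac1 : ∃ s : 𝓞 K, a * c + 1 = s ^ 2)
    (hbc1 : ∃ t : 𝓞 K, b * c + 1 = t ^ 2)
    (hcd1 : ∃ w : 𝓞 K, c * d + 1 = w ^ 2)
    (h2a : 2 ≤ ‖f (a : K)‖)
    (hab' : ‖f (a : K)‖ ≤ ‖f (b : K)‖)
    (hbc' : ‖f (b : K)‖ ≤ ‖f (c : K)‖)
    (hcd' : ‖f (c : K)‖ ≤ ‖f (d : K)‖)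
    (r x y : 𝓞 K) (hr : a * b + 1 = r ^ 2)
    (hx : a * d + 1 = x ^ 2) (hy : b * d + 1 = y ^ 2)
    (hreg1 : d ≠ a + b + 2 * r) (hreg2 : d ≠ a + b - 2 * r) :
    a + b + d + 2 * a * b * d + 2 * r * x * y ≠ 0 ∧
      a + b + d + 2 * a * b * d - 2 * r * x * y ≠ 0 := by
  have hprod : (a + b + d + 2 * a * b * d + 2 * r * x * y) *
      (a + b + d + 2 * a * b * d - 2 * r * x * y) =
      (d - a - b - 2 * r) * (d - a - b + 2 * r) := by
    linear_combination (4 - 4 * x ^ 2 * y ^ 2 + 8 * (a * d + 1) * (b * d + 1) - 8) * hr +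
      (8 * r ^ 2 * (b * d + 1) - 4 * (a * b + 1) * y ^ 2) * hx +
      (8 * r ^ 2 * x ^ 2 - 4 * (a * b + 1) * (a * d + 1)) * hy
  constructor <;> intro h
  · have h0 : (d - a - b - 2 * r) * (d - a - b + 2 * r) = 0 := by rw [← hprod, h, zero_mul]
    rcases mul_eq_zero.mp h0 with h' | h'
    · exact hreg1 (by linear_combination h')
    · exact hreg2 (by linear_combination h')
  · have h0 : (d - a - b - 2 * r) * (d - a - b + 2 * r) = 0 := by rw [← hprod, h, mul_zero]
    rcases mul_eq_zero.mp h0 with h' | h'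
    · exact hreg1 (by linear_combination h')
    · exact hreg2 (by linear_combination h')
end

section
/- If {a, b, c, d} is a Diophantine quadruple in the ring of integers O_K of an imaginary quadratic field with 2 ≤ |a| ≤ |b| ≤ |c| ≤ |d| (complex absolute values), then |d| ≥ |ab|/8 ≥ |a|^2/8. -/
open NumberField

noncomputable def Complex.abs : AbsoluteValue ℂ ℝ where
  toFun := fun z => ‖z‖
  map_mul' := norm_mul
  nonneg' := norm_nonneg
  eq_zero' := fun _ => norm_eq_zero
  add_le' := norm_add_le

theorem Complex.abs_apply_eq_norm (z : ℂ) : Complex.abs z = ‖z‖ := rfl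

theorem Complex.abs_conj (z : ℂ) : Complex.abs (starRingEnd ℂ z) = Complex.abs z :=
  Complex.norm_conj z

theorem Complex.abs_ofReal (r : ℝ) : Complex.abs (r : ℂ) = |r| :=
  Complex.norm_real r

@[simp]
theorem Complex.abs_ofNat (n : ℕ) [n.AtLeastTwo] :
    Complex.abs (no_index (OfNat.ofNat n : ℂ)) = OfNat.ofNat n :=
  Complex.norm_ofNat n

@[simp]
theorem Complex.abs_two : Complex.abs (2 : ℂ) = 2 := Complex.norm_two

lemma aux_one_le_abs {K : Type*} [Field K] [NumberField K]
    (hdeg : Module.finrank ℚ K = 2)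
    (f : K →+* ℂ) (him : ∃ w : K, (f w).im ≠ 0)
    {ξ : 𝓞 K} (hξ : ξ ≠ 0) : 1 ≤ Complex.abs (f (ξ : K)) := by
  classical
  have hcard : Fintype.card (K →+* ℂ) = 2 := by
    rw [NumberField.Embeddings.card K ℂ, hdeg]
  set g : K →+* ℂ := (starRingEnd ℂ).comp f with hg
  obtain ⟨w, hw⟩ := him
  have hfg : f ≠ g := by
    intro h
    apply hw
    have h2 : f w = g w := by rw [← h]
    rw [hg] at h2
    simp only [RingHom.comp_apply] at h2
    have := congrArg Complex.im h2
    simp [Complex.conj_im] at this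
    linarith
  have huniv : (Finset.univ : Finset (K →+* ℂ)) = {f, g} := by
    symm
    apply Finset.eq_univ_of_card
    rw [Finset.card_insert_of_notMem (by simpa using hfg), Finset.card_singleton, hcard]
  have hprod : (algebraMap ℚ ℂ) (Algebra.norm ℚ (ξ : K)) = ∏ σ : K →ₐ[ℚ] ℂ, σ (ξ : K) :=
    Algebra.norm_eq_prod_embeddings ℚ ℂ (ξ : K)
  have hprod2 : ∏ σ : K →ₐ[ℚ] ℂ, σ (ξ : K) = ∏ φ : K →+* ℂ, φ (ξ : K) := by
    exact (Fintype.prod_equiv (RingHom.equivRatAlgHom K ℂ) (fun φ => φ (ξ : K))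
      (fun σ => σ (ξ : K)) (fun φ => rfl)).symm
  have hprod3 : ∏ φ : K →+* ℂ, φ (ξ : K) = f (ξ : K) * g (ξ : K) := by
    rw [huniv]
    exact Finset.prod_pair hfg
  have habs : Complex.abs (f (ξ : K) * g (ξ : K)) = Complex.abs (f (ξ : K)) ^ 2 := by
    rw [map_mul]
    have : Complex.abs (g (ξ : K)) = Complex.abs (f (ξ : K)) := by
      rw [hg]; exact Complex.abs_conj _
    rw [this, sq]
  have hnz : Algebra.norm ℚ (ξ : K) ≠ 0 := by
    rw [Algebra.norm_ne_zero_iff]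
    exact fun h => hξ (by exact_mod_cast RingOfIntegers.coe_eq_zero_iff.mp h)
  have hint : Algebra.norm ℚ (ξ : K) = ((Algebra.norm ℤ ξ : ℤ) : ℚ) :=
    (Algebra.coe_norm_int ξ).symm
  have hn1 : (1 : ℚ) ≤ |Algebra.norm ℚ (ξ : K)| := by
    rw [hint]
    have : (Algebra.norm ℤ ξ : ℤ) ≠ 0 := by
      intro h0; apply hnz; rw [hint, h0]; norm_num
    rw [← Int.cast_abs]
    exact_mod_cast Int.one_le_abs (by exact_mod_cast this)
  have : Complex.abs ((algebraMap ℚ ℂ) (Algebra.norm ℚ (ξ : K))) = |Algebra.norm ℚ (ξ : K)| := by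
    rw [show (algebraMap ℚ ℂ) (Algebra.norm ℚ (ξ : K)) = ((Algebra.norm ℚ (ξ : K) : ℚ) : ℂ) from rfl,
      ← Complex.ofReal_ratCast, Complex.abs_ofReal, ← Rat.cast_abs]
  have hfin : 1 ≤ Complex.abs (f (ξ : K)) ^ 2 := by
    rw [← habs, ← hprod3, ← hprod2, ← hprod]
    rw [this]
    exact_mod_cast hn1
  nlinarith [Complex.abs.nonneg (f (ξ : K))]

set_option maxHeartbeats 1000000 in
lemma aux_core {K : Type*} [Field K] [NumberField K]
    (f : K →+* ℂ)
    (h1 : ∀ ξ : 𝓞 K, ξ ≠ 0 → 1 ≤ Complex.abs (f (ξ : K)))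
    (x y z p q t : 𝓞 K)
    (hp : x * y + 1 = p ^ 2) (hq : x * z + 1 = q ^ 2) (ht : y * z + 1 = t ^ 2)
    (h2x : 2 ≤ Complex.abs (f (x : K))) (h2y : 2 ≤ Complex.abs (f (y : K)))
    (hxz : Complex.abs (f (x : K)) ≤ Complex.abs (f (z : K)))
    (hyz : Complex.abs (f (y : K)) ≤ Complex.abs (f (z : K)))
    (hQ : (z - x - y) ^ 2 ≠ 4 * (x * y + 1)) :
    Complex.abs (f (x : K)) * Complex.abs (f (y : K)) ≤ 8 * Complex.abs (f (z : K)) := by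
  set g : 𝓞 K →+* ℂ := f.comp (algebraMap (𝓞 K) K) with hgdef
  have hgabs : ∀ ξ : 𝓞 K, Complex.abs (g ξ) = Complex.abs (f (ξ : K)) := fun ξ => rfl
  set α := Complex.abs (f (x : K)) with hα
  set β := Complex.abs (f (y : K)) with hβ
  set γ := Complex.abs (f (z : K)) with hγ
  have h2z : 2 ≤ γ := le_trans h2x hxz
  have hα0 : 0 ≤ α := Complex.abs.nonneg _
  have hβ0 : 0 ≤ β := Complex.abs.nonneg _
  have hγ0 : 0 ≤ γ := Complex.abs.nonneg _
  set Cp : 𝓞 K := x + y + z + 2 * (x * y * z) + 2 * (p * q * t) with hCp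
  set Cm : 𝓞 K := x + y + z + 2 * (x * y * z) - 2 * (p * q * t) with hCm
  have hid : Cp * Cm = x ^ 2 + y ^ 2 + z ^ 2 - 2 * (x * y) - 2 * (x * z) - 2 * (y * z) - 4 := by
    have e : Cp * Cm = (x + y + z + 2 * (x * y * z)) ^ 2
        - 4 * (p ^ 2 * (q ^ 2 * t ^ 2)) := by rw [hCp, hCm]; ring
    rw [← hp, ← hq, ← ht] at e
    rw [e]; ring
  have hQne : Cp * Cm ≠ 0 := by
    rw [hid]
    intro h0
    apply hQ
    linear_combination h0
  have hCpne : Cp ≠ 0 := fun h => hQne (by rw [h, zero_mul])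
  have hCmne : Cm ≠ 0 := fun h => hQne (by rw [h, mul_zero])
  set A := Complex.abs (g Cp) with hA
  set B := Complex.abs (g Cm) with hB
  have hA1 : 1 ≤ A := h1 Cp hCpne
  have hB1 : 1 ≤ B := h1 Cm hCmne
  set X := g x with hX
  set Y := g y with hY
  set Z := g z with hZ
  have haX : Complex.abs X = α := hgabs x
  have haY : Complex.abs Y = β := hgabs y
  have haZ : Complex.abs Z = γ := hgabs z
  have e2 : g Cp * g Cm =
      X ^ 2 + Y ^ 2 + Z ^ 2 - 2 * (X * Y) - 2 * (X * Z) - 2 * (Y * Z) - 4 := by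
    rw [← map_mul, hid]
    simp only [map_add, map_sub, map_mul, map_pow, map_ofNat, hX, hY, hZ]
  have hAB : A * B ≤ 10 * γ ^ 2 := by
    have habs_sum : Complex.abs (X ^ 2 + Y ^ 2 + Z ^ 2 - 2 * (X * Y) - 2 * (X * Z)
        - 2 * (Y * Z) - 4) ≤ α ^ 2 + β ^ 2 + γ ^ 2 + 2 * (α * β) + 2 * (α * γ)
        + 2 * (β * γ) + 4 := by
      calc Complex.abs (X ^ 2 + Y ^ 2 + Z ^ 2 - 2 * (X * Y) - 2 * (X * Z) - 2 * (Y * Z) - 4)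
          ≤ Complex.abs (X ^ 2 + Y ^ 2 + Z ^ 2 - 2 * (X * Y) - 2 * (X * Z) - 2 * (Y * Z))
            + Complex.abs 4 := Complex.abs.sub_le_add _ _
        _ ≤ (Complex.abs (X ^ 2 + Y ^ 2 + Z ^ 2 - 2 * (X * Y) - 2 * (X * Z))
            + Complex.abs (2 * (Y * Z))) + Complex.abs 4 := by
              gcongr; exact Complex.abs.sub_le_add _ _
        _ ≤ ((Complex.abs (X ^ 2 + Y ^ 2 + Z ^ 2 - 2 * (X * Y))
            + Complex.abs (2 * (X * Z))) + Complex.abs (2 * (Y * Z))) + Complex.abs 4 := by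
              gcongr; exact Complex.abs.sub_le_add _ _
        _ ≤ (((Complex.abs (X ^ 2 + Y ^ 2 + Z ^ 2) + Complex.abs (2 * (X * Y)))
            + Complex.abs (2 * (X * Z))) + Complex.abs (2 * (Y * Z))) + Complex.abs 4 := by
              gcongr; exact Complex.abs.sub_le_add _ _
        _ ≤ ((((Complex.abs (X ^ 2 + Y ^ 2) + Complex.abs (Z ^ 2)) + Complex.abs (2 * (X * Y)))
            + Complex.abs (2 * (X * Z))) + Complex.abs (2 * (Y * Z))) + Complex.abs 4 := by
              gcongr; exact Complex.abs.add_le _ _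
        _ ≤ (((((Complex.abs (X ^ 2) + Complex.abs (Y ^ 2)) + Complex.abs (Z ^ 2))
            + Complex.abs (2 * (X * Y))) + Complex.abs (2 * (X * Z)))
            + Complex.abs (2 * (Y * Z))) + Complex.abs 4 := by
              gcongr; exact Complex.abs.add_le _ _
        _ = α ^ 2 + β ^ 2 + γ ^ 2 + 2 * (α * β) + 2 * (α * γ) + 2 * (β * γ) + 4 := by
              simp only [map_mul, map_pow, haX, haY, haZ, Complex.abs_two, Complex.abs_ofNat]
              try ring
    have : A * B = Complex.abs (X ^ 2 + Y ^ 2 + Z ^ 2 - 2 * (X * Y) - 2 * (X * Z)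
        - 2 * (Y * Z) - 4) := by rw [hA, hB, ← map_mul, e2]
    rw [this]
    nlinarith [habs_sum, h2z, hxz, hyz, h2x, h2y]
  set π := Complex.abs (g (p * q * t)) with hπ
  have hsum : 4 * π ≤ A + B := by
    have e3 : g Cp - g Cm = 4 * g (p * q * t) := by
      rw [← map_sub]
      have : Cp - Cm = 4 * (p * q * t) := by rw [hCp, hCm]; ring
      rw [this, map_mul, map_ofNat]
    calc 4 * π = Complex.abs (4 * g (p * q * t)) := by
          rw [map_mul]; norm_num [hπ]
      _ = Complex.abs (g Cp - g Cm) := by rw [e3]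
      _ ≤ A + B := Complex.abs.sub_le_add _ _
  have hp2 : (3 / 4) * (α * β) ≤ Complex.abs (g p) ^ 2 := by
    have e0 : g (p ^ 2) = X * Y + 1 := by
      rw [← hp]
      simp only [map_add, map_mul, map_one, hX, hY]
    have e4 : Complex.abs (g p) ^ 2 = Complex.abs (X * Y + 1) := by
      rw [← map_pow Complex.abs, ← map_pow g, e0]
    have tri : Complex.abs (X * Y) ≤ Complex.abs (X * Y + 1) + 1 := by
      calc Complex.abs (X * Y) = Complex.abs ((X * Y + 1) - 1) := by congr 1; ring
        _ ≤ Complex.abs (X * Y + 1) + Complex.abs 1 := Complex.abs.sub_le_add _ _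
        _ = Complex.abs (X * Y + 1) + 1 := by rw [map_one]
    rw [e4]
    rw [map_mul, haX, haY] at tri
    nlinarith [h2x, h2y, hα0, hβ0]
  have hq2 : (3 / 4) * (α * γ) ≤ Complex.abs (g q) ^ 2 := by
    have e0 : g (q ^ 2) = X * Z + 1 := by
      rw [← hq]
      simp only [map_add, map_mul, map_one, hX, hZ]
    have e4 : Complex.abs (g q) ^ 2 = Complex.abs (X * Z + 1) := by
      rw [← map_pow Complex.abs, ← map_pow g, e0]
    have tri : Complex.abs (X * Z) ≤ Complex.abs (X * Z + 1) + 1 := by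
      calc Complex.abs (X * Z) = Complex.abs ((X * Z + 1) - 1) := by congr 1; ring
        _ ≤ Complex.abs (X * Z + 1) + Complex.abs 1 := Complex.abs.sub_le_add _ _
        _ = Complex.abs (X * Z + 1) + 1 := by rw [map_one]
    rw [e4]
    rw [map_mul, haX, haZ] at tri
    nlinarith [h2x, h2z, hα0, hγ0]
  have ht2 : (3 / 4) * (β * γ) ≤ Complex.abs (g t) ^ 2 := by
    have e0 : g (t ^ 2) = Y * Z + 1 := by
      rw [← ht]
      simp only [map_add, map_mul, map_one, hY, hZ]
    have e4 : Complex.abs (g t) ^ 2 = Complex.abs (Y * Z + 1) := by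
      rw [← map_pow Complex.abs, ← map_pow g, e0]
    have tri : Complex.abs (Y * Z) ≤ Complex.abs (Y * Z + 1) + 1 := by
      calc Complex.abs (Y * Z) = Complex.abs ((Y * Z + 1) - 1) := by congr 1; ring
        _ ≤ Complex.abs (Y * Z + 1) + Complex.abs 1 := Complex.abs.sub_le_add _ _
        _ = Complex.abs (Y * Z + 1) + 1 := by rw [map_one]
    rw [e4]
    rw [map_mul, haY, haZ] at tri
    nlinarith [h2y, h2z, hβ0, hγ0]
  have hπ2 : (27 / 64) * (α * β * γ) ^ 2 ≤ π ^ 2 := by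
    have : π ^ 2 = Complex.abs (g p) ^ 2 * (Complex.abs (g q) ^ 2 * Complex.abs (g t) ^ 2) := by
      simp only [hπ, map_mul]; ring
    rw [this]
    have hpq : (3 / 4) * (α * β) * ((3 / 4) * (α * γ)) ≤
        Complex.abs (g p) ^ 2 * Complex.abs (g q) ^ 2 := by
      apply mul_le_mul hp2 hq2 (by positivity) (by positivity)
    have hpqt : (3 / 4) * (α * β) * ((3 / 4) * (α * γ)) * ((3 / 4) * (β * γ)) ≤
        Complex.abs (g p) ^ 2 * Complex.abs (g q) ^ 2 * Complex.abs (g t) ^ 2 := by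
      apply mul_le_mul hpq ht2 (by positivity) (by positivity)
    nlinarith [hpqt]
  have hπ0 : 0 ≤ π := Complex.abs.nonneg _
  have hsum2 : (5 / 2) * (α * β * γ) ≤ A + B := by
    have h16 : (25 / 4) * (α * β * γ) ^ 2 ≤ (A + B) ^ 2 := by
      nlinarith [hsum, hπ2, hπ0, hA1, hB1]
    nlinarith [h16, hA1, hB1, mul_nonneg (mul_nonneg hα0 hβ0) hγ0]
  have hfinal : (5 / 4) * (α * β * γ) ≤ 10 * γ ^ 2 := by
    rcases le_total A B with hcase | hcase
    · have hmax : (5 / 4) * (α * β * γ) ≤ B := by linarith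
      have : B ≤ A * B := le_mul_of_one_le_left (by linarith) hA1
      linarith
    · have hmax : (5 / 4) * (α * β * γ) ≤ A := by linarith
      have : A ≤ A * B := le_mul_of_one_le_right (by linarith) hB1
      linarith
  nlinarith [hfinal, h2z]

/-- If `{a, b, c, d}` is a Diophantine quadruple in `𝓞 K` with `2 ≤ |a| ≤ |b| ≤ |c| ≤ |d|`,
then `|d| ≥ |ab|/8 ≥ |a|²/8`. -/
theorem stmt_17 (K : Type*) [Field K] [NumberField K]
    (hdeg : Module.finrank ℚ K = 2)
    (f : K →+* ℂ) (him : ∃ w : K, (f w).im ≠ 0)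
    (a b c d : 𝓞 K)
    (ha0 : a ≠ 0) (hb0 : b ≠ 0) (hc0 : c ≠ 0) (hd0 : d ≠ 0)
    (hab : a ≠ b) (hac : a ≠ c) (had : a ≠ d) (hbc : b ≠ c) (hbd : b ≠ d) (hcd : c ≠ d)
    (hab1 : ∃ r : 𝓞 K, a * b + 1 = r ^ 2)
    (hac1 : ∃ s : 𝓞 K, a * c + 1 = s ^ 2)
    (had1 : ∃ u : 𝓞 K, a * d + 1 = u ^ 2)
    (hbc1 : ∃ t : 𝓞 K, b * c + 1 = t ^ 2)
    (hbd1 : ∃ v : 𝓞 K, b * d + 1 = v ^ 2)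
    (hcd1 : ∃ w : 𝓞 K, c * d + 1 = w ^ 2)
    (h2a : 2 ≤ ‖f (a : K)‖)
    (hab' : ‖f (a : K)‖ ≤ ‖f (b : K)‖)
    (hbc' : ‖f (b : K)‖ ≤ ‖f (c : K)‖)
    (hcd' : ‖f (c : K)‖ ≤ ‖f (d : K)‖) :
    ‖f (d : K)‖ ≥ ‖f ((a : K) * b)‖ / 8 ∧
      ‖f ((a : K) * b)‖ / 8 ≥ ‖f (a : K)‖ ^ 2 / 8 := by
  simp only [← Complex.abs_apply_eq_norm] at h2a hab' hbc' hcd' ⊢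
  obtain ⟨r, hr⟩ := hab1
  obtain ⟨s, hs⟩ := hac1
  obtain ⟨u, hu⟩ := had1
  obtain ⟨t, htq⟩ := hbc1
  obtain ⟨v, hv⟩ := hbd1
  obtain ⟨w, hw⟩ := hcd1
  have h1 : ∀ ξ : 𝓞 K, ξ ≠ 0 → 1 ≤ Complex.abs (f (ξ : K)) :=
    fun ξ hξ => aux_one_le_abs hdeg f him hξ
  have habmul : Complex.abs (f ((a : K) * b)) =
      Complex.abs (f (a : K)) * Complex.abs (f (b : K)) := by
    rw [map_mul, map_mul]
  have h2b : 2 ≤ Complex.abs (f (b : K)) := le_trans h2a hab'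
  have h2c : 2 ≤ Complex.abs (f (c : K)) := le_trans h2b hbc'
  have had' : Complex.abs (f (a : K)) ≤ Complex.abs (f (d : K)) :=
    le_trans hab' (le_trans hbc' hcd')
  have hbd' : Complex.abs (f (b : K)) ≤ Complex.abs (f (d : K)) := le_trans hbc' hcd'
  have hac' : Complex.abs (f (a : K)) ≤ Complex.abs (f (c : K)) := le_trans hab' hbc'
  have key : Complex.abs (f (a : K)) * Complex.abs (f (b : K)) ≤
      8 * Complex.abs (f (d : K)) := by
    by_cases hQd : (d - a - b) ^ 2 = 4 * (a * b + 1)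
    · by_cases hQc : (c - a - b) ^ 2 = 4 * (a * b + 1)
      · by_cases hQb : (d - b - c) ^ 2 = 4 * (b * c + 1)
        · exfalso
          have hsplit : (d - c) * (d + c - 2 * a - 2 * b) = 0 := by
            linear_combination hQd - hQc
          rcases mul_eq_zero.mp hsplit with h | h
          · exact hcd (by linear_combination -h)
          · have key3 : (3 : 𝓞 K) * ((b - (c - a - b)) * (b + (c - a - b))) = 0 := by
              linear_combination hQc - hQb + (d + 2 * a - 3 * c) * h
            have h3 : (3 : 𝓞 K) ≠ 0 := by
              intro hh
              have h3K : ((3 : 𝓞 K) : K) = 0 := by rw [hh]; simp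
              norm_num at h3K
            rcases mul_eq_zero.mp key3 with h' | h'
            · exact h3 h'
            rcases mul_eq_zero.mp h' with h'' | h''
            · exact had (by linear_combination -h - h'')
            · exact hac (by linear_combination -h'')
        · -- use the triple (b, c, d)
          have hcore := aux_core f h1 b c d t v w htq hv hw h2b h2c hbd' hcd' hQb
          calc Complex.abs (f (a : K)) * Complex.abs (f (b : K))
              ≤ Complex.abs (f (b : K)) * Complex.abs (f (c : K)) := by
                nlinarith [hac', h2b, h2c, h2a]
            _ ≤ 8 * Complex.abs (f (d : K)) := hcore
      · -- use the triple (a, b, c)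
        have hcore := aux_core f h1 a b c r s t hr hs htq h2a h2b hac' hbc' hQc
        calc Complex.abs (f (a : K)) * Complex.abs (f (b : K))
            ≤ 8 * Complex.abs (f (c : K)) := hcore
          _ ≤ 8 * Complex.abs (f (d : K)) := by linarith
    · -- use the triple (a, b, d)
      exact aux_core f h1 a b d r u v hr hu hv h2a h2b had' hbd' hQd
  constructor
  · rw [ge_iff_le, habmul, div_le_iff₀ (by norm_num : (0:ℝ) < 8)]
    linarith
  · rw [ge_iff_le, habmul]
    have h0a : 0 ≤ Complex.abs (f (a : K)) := Complex.abs.nonneg _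
    have hsq : Complex.abs (f (a : K)) ^ 2 ≤
        Complex.abs (f (a : K)) * Complex.abs (f (b : K)) := by
      nlinarith [hab', h0a]
    linarith
end
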